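/- arXiv:2110.07308 — 5 statements merged into one kernel-verified Lean document; each statement's English description precedes it below -/
import Mathlib

section
/- The Fenchel conjugate of f₂(x) = (λ/M)‖x_S‖₁ + ι_{x_{S'} = 0}(x) + ι_{‖x‖∞ ≤ M}(x) evaluated at v ∈ ℝ^n equals Σ_{i∈S} M·max(0, |vᵢ| − λ/M) + M·‖v_{S''}‖₁. -/
/-- Fenchel conjugate of f₂(x) = (λ/M)‖x_S‖₁ + ι_{x_{S'}=0}(x) + ι_{‖x‖∞≤M}(x):
the supremum defining the conjugate (taken over the effective domain) is attained
and equals Σ_{i∈S} M·max(0, |vᵢ| − λ/M) + M·‖v_{S''}‖₁. -/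
theorem fenchel_conjugate_f2 {n : ℕ} (S S' S'' : Finset (Fin n))
    (hcover : S ∪ S' ∪ S'' = Finset.univ)
    (hSS' : Disjoint S S') (hSS'' : Disjoint S S'') (hS'S'' : Disjoint S' S'')
    (lam M : ℝ) (hlam : 0 < lam) (hM : 0 < M) (v : Fin n → ℝ) :
    IsGreatest
      {c : ℝ | ∃ x : Fin n → ℝ, (∀ i, |x i| ≤ M) ∧ (∀ i ∈ S', x i = 0) ∧
        c = (∑ i, v i * x i) - (lam / M) * ∑ i ∈ S, |x i|}
      ((∑ i ∈ S, M * max 0 (|v i| - lam / M)) + M * ∑ i ∈ S'', |v i|) := by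
  have hsplit : ∀ g : Fin n → ℝ,
      ∑ i, g i = (∑ i ∈ S, g i) + (∑ i ∈ S', g i) + (∑ i ∈ S'', g i) := by
    intro g
    rw [← hcover, Finset.sum_union (Finset.disjoint_union_left.mpr ⟨hSS'', hS'S''⟩),
      Finset.sum_union hSS']
  constructor
  · set X : Fin n → ℝ := fun i =>
      if i ∈ S then (if lam / M < |v i| then (if 0 ≤ v i then M else -M) else 0)
      else if i ∈ S' then 0 else (if 0 ≤ v i then M else -M) with hX
    refine ⟨X, ?_, ?_, ?_⟩
    · intro i
      simp only [hX]
      split_ifs <;> simp [abs_of_nonneg hM.le, hM.le]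
    · intro i hi
      have hiS : i ∉ S := Finset.disjoint_right.mp hSS' hi
      simp [hX, hiS, hi]
    · rw [hsplit fun i => v i * X i]
      have h1 : ∑ i ∈ S, v i * X i - lam / M * ∑ i ∈ S, |X i|
          = ∑ i ∈ S, M * max 0 (|v i| - lam / M) := by
        rw [Finset.mul_sum, ← Finset.sum_sub_distrib]
        refine Finset.sum_congr rfl fun i hi => ?_
        simp only [hX, if_pos hi]
        split_ifs with h h2
        · rw [abs_of_nonneg hM.le,
            max_eq_right (by rw [abs_of_nonneg h2] at h ⊢; linarith : (0:ℝ) ≤ |v i| - lam / M),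
            abs_of_nonneg h2]
          ring
        · rw [abs_neg, abs_of_nonneg hM.le,
            max_eq_right (by linarith : (0:ℝ) ≤ |v i| - lam / M)]
          rw [abs_of_neg (lt_of_not_ge h2)]
          ring
        · rw [max_eq_left (by push_neg at h; linarith : |v i| - lam / M ≤ 0)]
          simp
      have h2 : ∑ i ∈ S', v i * X i = 0 := by
        refine Finset.sum_eq_zero fun i hi => ?_
        have hiS : i ∉ S := Finset.disjoint_right.mp hSS' hi
        simp [hX, hiS, hi]
      have h3 : ∑ i ∈ S'', v i * X i = M * ∑ i ∈ S'', |v i| := by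
        rw [Finset.mul_sum]
        refine Finset.sum_congr rfl fun i hi => ?_
        have hiS : i ∉ S := Finset.disjoint_right.mp hSS'' hi
        have hiS' : i ∉ S' := Finset.disjoint_right.mp hS'S'' hi
        simp only [hX, if_neg hiS, if_neg hiS']
        split_ifs with h
        · rw [abs_of_nonneg h]; ring
        · rw [abs_of_neg (lt_of_not_ge h)]; ring
      rw [h2, h3]
      linarith
  · rintro c ⟨x, hx, hx0, rfl⟩
    have hS' : ∑ i ∈ S', v i * x i = 0 :=
      Finset.sum_eq_zero fun i hi => by simp [hx0 i hi]
    rw [hsplit fun i => v i * x i, hS']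
    have hS : ∑ i ∈ S, v i * x i - lam / M * ∑ i ∈ S, |x i|
        ≤ ∑ i ∈ S, M * max 0 (|v i| - lam / M) := by
      rw [Finset.mul_sum, ← Finset.sum_sub_distrib]
      refine Finset.sum_le_sum fun i _ => ?_
      have h1 : v i * x i ≤ |v i| * |x i| := (le_abs_self _).trans_eq (abs_mul _ _)
      have h2 : 0 ≤ (max 0 (|v i| - lam / M) - (|v i| - lam / M)) * |x i| :=
        mul_nonneg (sub_nonneg.mpr (le_max_right _ _)) (abs_nonneg _)
      have h3 : 0 ≤ max 0 (|v i| - lam / M) * (M - |x i|) :=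
        mul_nonneg (le_max_left _ _) (sub_nonneg.mpr (hx i))
      nlinarith
    have hS'' : ∑ i ∈ S'', v i * x i ≤ M * ∑ i ∈ S'', |v i| := by
      rw [Finset.mul_sum]
      refine Finset.sum_le_sum fun i _ => ?_
      have h1 : v i * x i ≤ |v i| * |x i| := (le_abs_self _).trans_eq (abs_mul _ _)
      have h2 : |v i| * |x i| ≤ |v i| * M := mul_le_mul_of_nonneg_left (hx i) (abs_nonneg _)
      linarith [mul_comm M (|v i|) ▸ h2]
    linarith
end

section
/- Weak duality: for every u ∈ ℝ^m and every x ∈ ℝ^n feasible for the node relaxation (i.e., ‖x‖∞ ≤ M and x_{S₀} = 0), one has D(u) ≤ (1/2)‖y − Ax‖² + (λ/M)‖x_{S̄}‖₁ + λ|S₁|, where D(u) = (1/2)‖y‖² − (1/2)‖y − u‖² − Σ_{i∈S̄} π⁰ᵢ(u) − Σ_{i∈S₁} πᵢ(u). -/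
/-- Pivot value πᵢ(u) = M(|aᵢᵀu| − λ/M). -/
noncomputable def piv {m n : ℕ} (A : Fin m → Fin n → ℝ) (lam M : ℝ)
    (i : Fin n) (u : Fin m → ℝ) : ℝ :=
  M * (|∑ j, A j i * u j| - lam / M)

/-- Pivot value π⁰ᵢ(u) = M·max(0, |aᵢᵀu| − λ/M). -/
noncomputable def piv0 {m n : ℕ} (A : Fin m → Fin n → ℝ) (lam M : ℝ)
    (i : Fin n) (u : Fin m → ℝ) : ℝ :=
  M * max 0 (|∑ j, A j i * u j| - lam / M)

/-- Pivot value π¹ᵢ(u) = M·max(0, λ/M − |aᵢᵀu|). -/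
noncomputable def piv1 {m n : ℕ} (A : Fin m → Fin n → ℝ) (lam M : ℝ)
    (i : Fin n) (u : Fin m → ℝ) : ℝ :=
  M * max 0 (lam / M - |∑ j, A j i * u j|)

/-- Dual objective D^ν(u) of the ℓ₁-relaxation at node ν = (S₀, S₁, S̄). -/
noncomputable def dualObj {m n : ℕ} (A : Fin m → Fin n → ℝ) (y : Fin m → ℝ)
    (lam M : ℝ) (S1 Sbar : Finset (Fin n)) (u : Fin m → ℝ) : ℝ :=
  (1/2) * ∑ j, (y j)^2 - (1/2) * ∑ j, (y j - u j)^2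
    - ∑ i ∈ Sbar, piv0 A lam M i u - ∑ i ∈ S1, piv A lam M i u

/-- Weak duality: for every dual point u and every x feasible for the node
relaxation, D^ν(u) is at most the relaxed primal objective at x. -/
theorem weak_duality {m n : ℕ} (A : Fin m → Fin n → ℝ) (y : Fin m → ℝ)
    (lam M : ℝ) (hlam : 0 < lam) (hM : 0 < M)
    (hunit : ∀ i, ∑ j, (A j i)^2 = 1)
    (S0 S1 Sbar : Finset (Fin n))
    (hcover : S0 ∪ S1 ∪ Sbar = Finset.univ)
    (h01 : Disjoint S0 S1) (h0b : Disjoint S0 Sbar) (h1b : Disjoint S1 Sbar)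
    (u : Fin m → ℝ) (x : Fin n → ℝ)
    (hbox : ∀ i, |x i| ≤ M) (hS0 : ∀ i ∈ S0, x i = 0) :
    dualObj A y lam M S1 Sbar u
      ≤ (1/2) * ∑ j, (y j - ∑ i, A j i * x i)^2
          + (lam / M) * (∑ i ∈ Sbar, |x i|) + lam * S1.card := by
  set c : Fin n → ℝ := fun i => ∑ j, A j i * u j with hc
  have hMl : M * (lam / M) = lam := by field_simp
  -- Step 1: quadratic part
  have hquad : (1/2) * ∑ j, (y j)^2 - (1/2) * ∑ j, (y j - u j)^2
      ≤ (1/2) * ∑ j, (y j - ∑ i, A j i * x i)^2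
        + ∑ j, u j * (∑ i, A j i * x i) := by
    have hpt : ∀ j : Fin m, (1/2) * (y j)^2 - (1/2) * (y j - u j)^2
        ≤ (1/2) * (y j - ∑ i, A j i * x i)^2 + u j * (∑ i, A j i * x i) := by
      intro j
      nlinarith [sq_nonneg ((y j - ∑ i, A j i * x i) - u j)]
    calc (1/2) * ∑ j, (y j)^2 - (1/2) * ∑ j, (y j - u j)^2
        = ∑ j, ((1/2) * (y j)^2 - (1/2) * (y j - u j)^2) := by
          rw [Finset.mul_sum, Finset.mul_sum, ← Finset.sum_sub_distrib]
      _ ≤ ∑ j, ((1/2) * (y j - ∑ i, A j i * x i)^2 + u j * (∑ i, A j i * x i)) :=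
          Finset.sum_le_sum fun j _ => hpt j
      _ = _ := by rw [Finset.sum_add_distrib, Finset.mul_sum]
  -- Step 2: swap sums
  have hswap : ∑ j, u j * (∑ i, A j i * x i) = ∑ i, x i * c i := by
    simp only [hc, Finset.mul_sum, Finset.sum_mul]
    rw [Finset.sum_comm]
    apply Finset.sum_congr rfl; intro i _
    apply Finset.sum_congr rfl; intro j _
    ring
  -- Step 3: partition the sum
  have hpart : ∑ i, x i * c i
      = ∑ i ∈ S0, x i * c i + ∑ i ∈ S1, x i * c i + ∑ i ∈ Sbar, x i * c i := by
    rw [← Finset.sum_union h01, ← Finset.sum_union (Finset.disjoint_union_left.2 ⟨h0b, h1b⟩),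
      hcover]
  have hS0sum : ∑ i ∈ S0, x i * c i = 0 :=
    Finset.sum_eq_zero fun i hi => by rw [hS0 i hi]; ring
  -- Step 4: bound S1 terms
  have hS1sum : ∑ i ∈ S1, x i * c i - ∑ i ∈ S1, piv A lam M i u ≤ lam * S1.card := by
    rw [← Finset.sum_sub_distrib]
    calc ∑ i ∈ S1, (x i * c i - piv A lam M i u) ≤ ∑ i ∈ S1, lam := by
          apply Finset.sum_le_sum
          intro i _
          have h1 : x i * c i ≤ |x i| * |c i| := by
            calc x i * c i ≤ |x i * c i| := le_abs_self _
              _ = |x i| * |c i| := abs_mul _ _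
          have h2 : |x i| * |c i| ≤ M * |c i| :=
            mul_le_mul_of_nonneg_right (hbox i) (abs_nonneg _)
          simp only [piv, hc]
          nlinarith [abs_nonneg (c i)]
      _ = lam * S1.card := by rw [Finset.sum_const, nsmul_eq_mul]; ring
  -- Step 5: bound Sbar terms
  have hSbsum : ∑ i ∈ Sbar, x i * c i - ∑ i ∈ Sbar, piv0 A lam M i u
      ≤ (lam / M) * ∑ i ∈ Sbar, |x i| := by
    rw [← Finset.sum_sub_distrib, Finset.mul_sum]
    apply Finset.sum_le_sum
    intro i _
    have h1 : x i * c i ≤ |x i| * |c i| := by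
      calc x i * c i ≤ |x i * c i| := le_abs_self _
        _ = |x i| * |c i| := abs_mul _ _
    simp only [piv0, hc]
    rcases le_or_gt (|∑ j, A j i * u j|) (lam / M) with h | h
    · rw [max_eq_left (by linarith)]
      have h2 : |x i| * |c i| ≤ |x i| * (lam / M) :=
        mul_le_mul_of_nonneg_left h (abs_nonneg _)
      simp only [hc] at h1 h2 ⊢
      nlinarith
    · rw [max_eq_right (by linarith)]
      have h3 : 0 ≤ (M - |x i|) * (|c i| - lam / M) :=
        mul_nonneg (by linarith [hbox i]) (by simp only [hc]; linarith)
      simp only [hc] at h1 h3 ⊢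
      nlinarith
  simp only [dualObj]
  linarith [hquad, hswap ▸ hquad]
end

section
/- Strong duality holds for the node relaxation: min over {x : ‖x‖∞ ≤ M, x_{S₀} = 0} of (1/2)‖y − Ax‖² + (λ/M)‖x_{S̄}‖₁ + λ|S₁| equals max over u ∈ ℝ^m of (1/2)‖y‖² − (1/2)‖y − u‖² − Σ_{i∈S̄} π⁰ᵢ(u) − Σ_{i∈S₁} πᵢ(u). -/
lemma sum_swap_aux {m n : ℕ} (A : Fin m → Fin n → ℝ) (u : Fin m → ℝ) (x : Fin n → ℝ) :
    ∑ j, u j * ∑ i, A j i * x i = ∑ i, (∑ j, A j i * u j) * x i := by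
  simp only [Finset.mul_sum, Finset.sum_mul]
  rw [Finset.sum_comm]
  apply Finset.sum_congr rfl; intro j _
  apply Finset.sum_congr rfl; intro i _
  ring

lemma quad_identity {m : ℕ} (y u v : Fin m → ℝ) :
    (1/2) * ∑ j, (y j - v j)^2 + ∑ j, u j * v j
      - ((1/2) * ∑ j, (y j)^2 - (1/2) * ∑ j, (y j - u j)^2)
      = (1/2) * ∑ j, (y j - u j - v j)^2 := by
  simp only [Finset.mul_sum, ← Finset.sum_sub_distrib, ← Finset.sum_add_distrib]
  apply Finset.sum_congr rfl; intro j _; ring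

lemma le_zero_of_forall_mul (a K : ℝ) (h : ∀ s : ℝ, 0 < s → s ≤ 1 → a ≤ K * s) : a ≤ 0 := by
  by_contra hc
  push_neg at hc
  rcases le_or_gt K 0 with hK | hK
  · have := h 1 one_pos le_rfl
    nlinarith
  · set s := min 1 (a/(2*K)) with hs_def
    have hs : 0 < s := lt_min one_pos (by positivity)
    have hs1 : s ≤ 1 := min_le_left _ _
    have h2 : s ≤ a/(2*K) := min_le_right _ _
    have := h s hs hs1
    have : K * s ≤ a/2 := by
      have := mul_le_mul_of_nonneg_left h2 hK.le
      calc K * s ≤ K * (a/(2*K)) := by nlinarith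
        _ = a/2 := by field_simp
    nlinarith [h s hs hs1]

lemma kkt1d (γ c M : ℝ) (hγ : 0 ≤ γ) (hM : 0 < M) (h : ℝ → ℝ) (t₀ : ℝ)
    (ht₀ : t₀ ∈ Set.Icc (-M) M)
    (hconv : ∀ t ∈ Set.Icc (-M) M, ∀ s : ℝ, 0 < s → s ≤ 1 →
      h ((1-s)*t₀ + s*t) ≤ (1-s)*h t₀ + s*h t)
    (hmin : ∀ t ∈ Set.Icc (-M) M, h t₀ ≤ c*(t₀-t) + γ*(t₀-t)^2 + h t) :
    ∀ t ∈ Set.Icc (-M) M, h t₀ ≤ c*(t₀-t) + h t := by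
  intro t ht
  have key : ∀ s : ℝ, 0 < s → s ≤ 1 →
      h t₀ - (c*(t₀-t) + h t) ≤ (γ*(t-t₀)^2) * s := by
    intro s hs hs1
    have hmem : (1-s)*t₀ + s*t ∈ Set.Icc (-M) M := by
      constructor <;> nlinarith [ht₀.1, ht₀.2, ht.1, ht.2]
    have h1 := hmin _ hmem
    have h2 := hconv t ht s hs hs1
    have : t₀ - ((1-s)*t₀ + s*t) = s*(t₀-t) := by ring
    rw [this] at h1
    have := h1.trans (by linarith : c*(s*(t₀-t)) + γ*(s*(t₀-t))^2 + h ((1-s)*t₀+s*t)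
      ≤ c*(s*(t₀-t)) + γ*(s*(t₀-t))^2 + ((1-s)*h t₀ + s*h t))
    nlinarith
  have := le_zero_of_forall_mul _ _ key
  linarith

lemma weak_sbar (lam M c t : ℝ) (hlam : 0 < lam) (hM : 0 < M) (ht : |t| ≤ M) :
    -(M * max 0 (|c| - lam/M)) ≤ (lam/M)*|t| - c*t := by
  have h1 : c*t ≤ |c| * |t| := by rw [← abs_mul]; exact le_abs_self _
  have h2 : 0 ≤ |t| := abs_nonneg t
  have h3 : 0 ≤ |c| := abs_nonneg c
  have hlM : 0 < lam/M := by positivity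
  rcases le_or_gt |c| (lam/M) with h | h
  · rw [max_eq_left (by linarith)]
    nlinarith
  · rw [max_eq_right (by linarith)]
    nlinarith

lemma weak_s1 (lam M c t : ℝ) (hM : 0 < M) (ht : |t| ≤ M) :
    -(M * (|c| - lam/M)) ≤ lam - c*t := by
  have h1 : c*t ≤ |c| * |t| := by rw [← abs_mul]; exact le_abs_self _
  have h3 : 0 ≤ |c| := abs_nonneg c
  have h4 : M * (lam/M) = lam := by field_simp
  nlinarith [abs_nonneg t]

lemma exists_min {m n : ℕ} (A : Fin m → Fin n → ℝ) (y : Fin m → ℝ)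
    (lam M : ℝ) (hM : 0 < M) (S0 Sbar : Finset (Fin n)) :
    ∃ x : Fin n → ℝ, (∀ i, |x i| ≤ M) ∧ (∀ i ∈ S0, x i = 0) ∧
      ∀ x' : Fin n → ℝ, (∀ i, |x' i| ≤ M) → (∀ i ∈ S0, x' i = 0) →
        (1/2) * ∑ j, (y j - ∑ i, A j i * x i)^2 + (lam/M) * (∑ i ∈ Sbar, |x i|)
        ≤ (1/2) * ∑ j, (y j - ∑ i, A j i * x' i)^2 + (lam/M) * (∑ i ∈ Sbar, |x' i|) := by
  set X : Set (Fin n → ℝ) := {x | (∀ i, |x i| ≤ M) ∧ ∀ i ∈ S0, x i = 0} with hX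
  set f : (Fin n → ℝ) → ℝ := fun x =>
    (1/2) * ∑ j, (y j - ∑ i, A j i * x i)^2 + (lam/M) * (∑ i ∈ Sbar, |x i|) with hf
  have hsub : X ⊆ Set.pi Set.univ (fun _ : Fin n => Set.Icc (-M) M) := by
    intro x hx i _
    exact abs_le.mp (hx.1 i)
  have hclosed : IsClosed X := by
    have h1 : IsClosed {x : Fin n → ℝ | ∀ i, |x i| ≤ M} := by
      have : {x : Fin n → ℝ | ∀ i, |x i| ≤ M} = ⋂ i, {x | |x i| ≤ M} := by ext; simp
      rw [this]
      exact isClosed_iInter fun i => isClosed_le (continuous_apply i).abs continuous_const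
    have h2 : IsClosed {x : Fin n → ℝ | ∀ i ∈ S0, x i = 0} := by
      have : {x : Fin n → ℝ | ∀ i ∈ S0, x i = 0} = ⋂ i ∈ S0, {x | x i = 0} := by ext; simp
      rw [this]
      exact isClosed_biInter fun i _ => isClosed_eq (continuous_apply i) continuous_const
    exact h1.inter h2
  have hcomp : IsCompact X :=
    IsCompact.of_isClosed_subset (isCompact_univ_pi fun _ => isCompact_Icc) hclosed hsub
  have hne : X.Nonempty := ⟨0, fun i => by simp [hM.le], fun i _ => rfl⟩
  have hcont : Continuous f := by
    apply Continuous.add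
    · exact continuous_const.mul (continuous_finset_sum _ fun j _ =>
        (continuous_const.sub (continuous_finset_sum _ fun i _ =>
          continuous_const.mul (continuous_apply i))).pow 2)
    · exact continuous_const.mul (continuous_finset_sum _ fun i _ => (continuous_apply i).abs)
  obtain ⟨x, hxX, hxmin⟩ := hcomp.exists_isMinOn hne hcont.continuousOn
  exact ⟨x, hxX.1, hxX.2, fun x' h1 h2 => hxmin ⟨h1, h2⟩⟩


/-- Strong duality for the node relaxation: the minimum of the relaxed primal
problem equals the maximum of the dual problem, and both are attained. -/
theorem strong_duality {m n : ℕ} (A : Fin m → Fin n → ℝ) (y : Fin m → ℝ)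
    (lam M : ℝ) (hlam : 0 < lam) (hM : 0 < M)
    (S0 S1 Sbar : Finset (Fin n))
    (hcover : S0 ∪ S1 ∪ Sbar = Finset.univ)
    (h01 : Disjoint S0 S1) (h0b : Disjoint S0 Sbar) (h1b : Disjoint S1 Sbar) :
    ∃ p d : ℝ,
      IsLeast {c : ℝ | ∃ x : Fin n → ℝ, (∀ i, |x i| ≤ M) ∧ (∀ i ∈ S0, x i = 0) ∧
          c = (1/2) * ∑ j, (y j - ∑ i, A j i * x i)^2
                + (lam / M) * (∑ i ∈ Sbar, |x i|) + lam * S1.card} p ∧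
      IsGreatest (Set.range fun u : Fin m → ℝ => dualObj A y lam M S1 Sbar u) d ∧
      p = d := by
  have hlM : 0 < lam / M := by positivity
  have hMlam : M * (lam / M) = lam := by field_simp
  obtain ⟨x, hx1, hx0, hxmin⟩ := exists_min A y lam M hM S0 Sbar
  set w : Fin m → ℝ := fun j => ∑ i, A j i * x i with hw
  set u : Fin m → ℝ := fun j => y j - w j with hu
  set c : Fin n → ℝ := fun i => ∑ j, A j i * u j with hc
  set γ : Fin n → ℝ := fun i => (1/2) * ∑ j, (A j i)^2 with hγ
  have hγpos : ∀ i, 0 ≤ γ i := fun i => by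
    rw [hγ]; positivity
  -- partition of sums over univ
  have hd : Disjoint (S0 ∪ S1) Sbar := Finset.disjoint_union_left.mpr ⟨h0b, h1b⟩
  have hpart : ∀ g : Fin n → ℝ, ∑ i, g i
      = ∑ i ∈ S0, g i + ∑ i ∈ S1, g i + ∑ i ∈ Sbar, g i := by
    intro g
    rw [← hcover, Finset.sum_union hd, Finset.sum_union h01]
  -- membership of S1/Sbar excludes S0
  have hnot0 : ∀ i, i ∈ S1 ∪ Sbar → i ∉ S0 := by
    intro i hi h0
    rcases Finset.mem_union.mp hi with h | h
    · exact (Finset.disjoint_left.mp h01 h0) h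
    · exact (Finset.disjoint_left.mp h0b h0) h
  -- sum with update
  have hupd : ∀ (i : Fin n) (t : ℝ) (j : Fin m),
      ∑ k, A j k * Function.update x i t k = w j + A j i * (t - x i) := by
    intro i t j
    have h1 : ∀ k, A j k * Function.update x i t k
        = A j k * x k + (if k = i then A j k * (t - x k) else 0) := by
      intro k
      rcases eq_or_ne k i with h | h
      · subst h; simp [Function.update_self]; ring
      · rw [Function.update_of_ne h, if_neg h]; ring
    rw [Finset.sum_congr rfl fun k _ => h1 k, Finset.sum_add_distrib,
      Finset.sum_ite_eq' Finset.univ i (fun k => A j k * (t - x k))]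
    simp [hw]
  -- quadratic expansion
  have hquad : ∀ (i : Fin n) (d : ℝ),
      (1/2) * ∑ j, (u j + A j i * d)^2
        = (1/2) * ∑ j, (u j)^2 + d * c i + γ i * d^2 := by
    intro i d
    rw [hc, hγ]
    simp only [Finset.mul_sum, Finset.sum_mul, ← Finset.sum_add_distrib]
    apply Finset.sum_congr rfl; intro j _; ring
  -- value of the objective at updated point (first term)
  have hval1 : ∀ (i : Fin n) (t : ℝ),
      (1/2) * ∑ j, (y j - ∑ k, A j k * Function.update x i t k)^2
        = (1/2) * ∑ j, (u j)^2 + (x i - t) * c i + γ i * (x i - t)^2 := by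
    intro i t
    have : ∀ j, (y j - ∑ k, A j k * Function.update x i t k) = u j + A j i * (x i - t) := by
      intro j; rw [hupd i t j]; simp [hu]; ring
    rw [show ∑ j, (y j - ∑ k, A j k * Function.update x i t k)^2
        = ∑ j, (u j + A j i * (x i - t))^2 from Finset.sum_congr rfl fun j _ => by rw [this j]]
    exact hquad i (x i - t)
  -- feasibility of updates
  have hfeas : ∀ (i : Fin n), i ∉ S0 → ∀ t : ℝ, |t| ≤ M →
      (∀ k, |Function.update x i t k| ≤ M) ∧ (∀ k ∈ S0, Function.update x i t k = 0) := by
    intro i hi t ht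
    constructor
    · intro k
      rcases eq_or_ne k i with h | h
      · subst h; simpa using ht
      · rw [Function.update_of_ne h]; exact hx1 k
    · intro k hk
      have : k ≠ i := fun h => hi (h ▸ hk)
      rw [Function.update_of_ne this]; exact hx0 k hk
  -- KKT for Sbar coordinates
  have hSbar : ∀ i ∈ Sbar, ∀ t ∈ Set.Icc (-M) M,
      (lam/M) * |x i| ≤ c i * (x i - t) + (lam/M) * |t| := by
    intro i hi
    have hi0 : i ∉ S0 := hnot0 i (Finset.mem_union_right _ hi)
    apply kkt1d (γ i) (c i) M (hγpos i) hM (fun t => (lam/M) * |t|) (x i)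
      (abs_le.mp (hx1 i))
    · intro t ht s hs hs1
      have h1 : |(1-s)*(x i) + s*t| ≤ (1-s)*|x i| + s*|t| := by
        calc |(1-s)*(x i) + s*t| ≤ |(1-s)*(x i)| + |s*t| := abs_add_le _ _
          _ = (1-s)*|x i| + s*|t| := by
              rw [abs_mul, abs_mul, abs_of_nonneg (by linarith : (0:ℝ) ≤ 1-s),
                abs_of_nonneg hs.le]
      nlinarith
    · intro t ht
      have ht' : |t| ≤ M := abs_le.mpr ht
      obtain ⟨hf1, hf2⟩ := hfeas i hi0 t ht'
      have hm := hxmin _ hf1 hf2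
      rw [hval1 i t] at hm
      have habs : ∑ k ∈ Sbar, |Function.update x i t k|
          = ∑ k ∈ Sbar, |x k| - |x i| + |t| := by
        have h1 : ∀ k, |Function.update x i t k|
            = Function.update (fun k => |x k|) i |t| k := by
          intro k
          rcases eq_or_ne k i with h | h
          · subst h; simp
          · simp [Function.update_of_ne h]
        rw [Finset.sum_congr rfl fun k _ => h1 k, Finset.sum_update_of_mem hi,
          Finset.sdiff_singleton_eq_erase, Finset.sum_erase_eq_sub hi]
        ring
      rw [habs] at hm
      have hfx : (1/2) * ∑ j, (y j - ∑ i, A j i * x i)^2 = (1/2) * ∑ j, (u j)^2 := by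
        apply congrArg
        apply Finset.sum_congr rfl; intro j _; rw [hu, hw]
      rw [hfx] at hm
      nlinarith [hm]
  -- KKT for S1 coordinates
  have hS1 : ∀ i ∈ S1, ∀ t ∈ Set.Icc (-M) M, 0 ≤ c i * (x i - t) := by
    intro i hi
    have hi0 : i ∉ S0 := hnot0 i (Finset.mem_union_left _ hi)
    have hib : i ∉ Sbar := Finset.disjoint_left.mp h1b hi
    have key := kkt1d (γ i) (c i) M (hγpos i) hM (fun _ => 0) (x i)
      (abs_le.mp (hx1 i)) (fun t ht s hs hs1 => by simp)
      (fun t ht => ?_)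
    · intro t ht
      have := key t ht
      simpa using this
    · have ht' : |t| ≤ M := abs_le.mpr ht
      obtain ⟨hf1, hf2⟩ := hfeas i hi0 t ht'
      have hm := hxmin _ hf1 hf2
      rw [hval1 i t] at hm
      have habs : ∑ k ∈ Sbar, |Function.update x i t k| = ∑ k ∈ Sbar, |x k| := by
        apply Finset.sum_congr rfl; intro k hk
        have : k ≠ i := fun h => hib (h ▸ hk)
        rw [Function.update_of_ne this]
      rw [habs] at hm
      have hfx : (1/2) * ∑ j, (y j - ∑ i, A j i * x i)^2 = (1/2) * ∑ j, (u j)^2 := by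
        apply congrArg
        apply Finset.sum_congr rfl; intro j _; rw [hu, hw]
      rw [hfx] at hm
      nlinarith [hm]
  -- per-coordinate equalities at the optimum
  have hpiv0u : ∀ i, piv0 A lam M i u = M * max 0 (|c i| - lam/M) := fun i => by
    rw [piv0, hc]
  have hpivu : ∀ i, piv A lam M i u = M * (|c i| - lam/M) := fun i => by
    rw [piv, hc]
  have eq_sbar : ∀ i ∈ Sbar, c i * x i - piv0 A lam M i u = (lam/M) * |x i| := by
    intro i hi
    rw [hpiv0u i]
    have hub : c i * x i ≤ |c i| * |x i| := by rw [← abs_mul]; exact le_abs_self _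
    rcases le_or_gt (|c i|) (lam/M) with h | h
    · rw [max_eq_left (by linarith)]
      have h1 := hSbar i hi 0 ⟨by linarith, hM.le⟩
      simp at h1
      have h2 : |c i| * |x i| ≤ (lam/M) * |x i| :=
        mul_le_mul_of_nonneg_right h (abs_nonneg _)
      nlinarith [abs_nonneg (x i)]
    · rw [max_eq_right (by linarith)]
      set t : ℝ := if 0 ≤ c i then M else -M with htdef
      have htm : t ∈ Set.Icc (-M) M := by
        rw [htdef]; split <;> constructor <;> linarith
      have hct : c i * t = M * |c i| := by
        rw [htdef]; split
        · rename_i hcs; rw [abs_of_nonneg hcs]; ring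
        · rename_i hcs; rw [abs_of_neg (lt_of_not_ge hcs)]; ring
      have habst : |t| = M := by rw [htdef]; split <;> simp [abs_of_nonneg hM.le, abs_of_nonpos, hM.le]
      have h1 := hSbar i hi t htm
      rw [habst] at h1
      have h2 := weak_sbar lam M (c i) (x i) hlam hM (hx1 i)
      rw [max_eq_right (by linarith)] at h2
      nlinarith
  have eq_s1 : ∀ i ∈ S1, c i * x i - piv A lam M i u = lam := by
    intro i hi
    rw [hpivu i]
    set t : ℝ := if 0 ≤ c i then M else -M with htdef
    have htm : t ∈ Set.Icc (-M) M := by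
      rw [htdef]; split <;> constructor <;> linarith
    have hct : c i * t = M * |c i| := by
      rw [htdef]; split
      · rename_i hcs; rw [abs_of_nonneg hcs]; ring
      · rename_i hcs; rw [abs_of_neg (lt_of_not_ge hcs)]; ring
    have h1 := hS1 i hi t htm
    have hub : c i * x i ≤ |c i| * |x i| := by rw [← abs_mul]; exact le_abs_self _
    have h2 : |c i| * |x i| ≤ |c i| * M := mul_le_mul_of_nonneg_left (hx1 i) (abs_nonneg _)
    nlinarith
  -- the candidate values
  have hpd : dualObj A y lam M S1 Sbar u = (1/2) * ∑ j, (y j - ∑ i, A j i * x i)^2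
      + (lam / M) * (∑ i ∈ Sbar, |x i|) + lam * S1.card := by
    have hq := quad_identity y u w
    have hzero : (1/2) * ∑ j, (y j - u j - w j)^2 = 0 := by
      have : ∀ j, (y j - u j - w j) = 0 := by intro j; rw [hu]; ring
      simp [this]
    rw [hzero] at hq
    have huw : ∑ j, u j * w j = ∑ i, c i * x i := by
      rw [hw, hc]; exact sum_swap_aux A u x
    have hsplit := hpart (fun i => c i * x i)
    have hS0z : ∑ i ∈ S0, c i * x i = 0 :=
      Finset.sum_eq_zero fun i hi => by rw [hx0 i hi, mul_zero]
    have esb : ∑ i ∈ Sbar, (c i * x i - piv0 A lam M i u)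
        = (lam/M) * (∑ i ∈ Sbar, |x i|) := by
      rw [Finset.sum_congr rfl eq_sbar, Finset.mul_sum]
    have es1 : ∑ i ∈ S1, (c i * x i - piv A lam M i u) = lam * S1.card := by
      rw [Finset.sum_congr rfl eq_s1, Finset.sum_const, nsmul_eq_mul, mul_comm]
    rw [Finset.sum_sub_distrib] at esb es1
    have hwsum : (1/2) * ∑ j, (y j - w j)^2 = (1/2) * ∑ j, (y j - ∑ i, A j i * x i)^2 := by
      apply congrArg; apply Finset.sum_congr rfl; intro j _; rw [hw]
    unfold dualObj
    linarith [hq, huw, hsplit, hS0z, esb, es1, hwsum]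
  refine ⟨(1/2) * ∑ j, (y j - ∑ i, A j i * x i)^2
      + (lam / M) * (∑ i ∈ Sbar, |x i|) + lam * S1.card,
      (1/2) * ∑ j, (y j - ∑ i, A j i * x i)^2
      + (lam / M) * (∑ i ∈ Sbar, |x i|) + lam * S1.card,
      ⟨⟨x, hx1, hx0, rfl⟩, ?_⟩, ⟨⟨u, hpd⟩, ?_⟩, rfl⟩
  · -- lower bound of primal
    rintro cc ⟨x', hx'1, hx'0, rfl⟩
    have := hxmin x' hx'1 hx'0
    linarith
  · -- upper bound of dual : weak duality
    rintro dd ⟨v, rfl⟩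
    set cv : Fin n → ℝ := fun i => ∑ j, A j i * v j with hcv
    have hq := quad_identity y v w
    have hq0 : 0 ≤ (1/2) * ∑ j, (y j - v j - w j)^2 := by positivity
    have hvw : ∑ j, v j * w j = ∑ i, cv i * x i := by
      rw [hw]; exact sum_swap_aux A v x
    have hsplit := hpart (fun i => cv i * x i)
    have hS0z : ∑ i ∈ S0, cv i * x i = 0 :=
      Finset.sum_eq_zero fun i hi => by rw [hx0 i hi, mul_zero]
    have hwb : ∀ i ∈ Sbar, -(piv0 A lam M i v) ≤ (lam/M) * |x i| - cv i * x i := by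
      intro i hi
      have := weak_sbar lam M (cv i) (x i) hlam hM (hx1 i)
      rw [piv0, show (∑ j, A j i * v j) = cv i from rfl]
      linarith
    have hw1 : ∀ i ∈ S1, -(piv A lam M i v) ≤ lam - cv i * x i := by
      intro i hi
      have := weak_s1 lam M (cv i) (x i) hM (hx1 i)
      rw [piv, show (∑ j, A j i * v j) = cv i from rfl]
      linarith
    have hsb := Finset.sum_le_sum hwb
    have hs1 := Finset.sum_le_sum hw1
    rw [Finset.sum_neg_distrib] at hsb hs1
    have e1 : ∑ i ∈ Sbar, ((lam/M) * |x i| - cv i * x i)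
        = (lam/M) * (∑ i ∈ Sbar, |x i|) - ∑ i ∈ Sbar, cv i * x i := by
      rw [Finset.sum_sub_distrib, Finset.mul_sum]
    have e2 : ∑ i ∈ S1, (lam - cv i * x i)
        = lam * S1.card - ∑ i ∈ S1, cv i * x i := by
      rw [Finset.sum_sub_distrib, Finset.sum_const, nsmul_eq_mul, mul_comm]
    unfold dualObj
    beta_reduce
    have hwsum : (1/2) * ∑ j, (y j - w j)^2 = (1/2) * ∑ j, (y j - ∑ i, A j i * x i)^2 := by
      apply congrArg; apply Finset.sum_congr rfl; intro j _; rw [hw]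
    linarith [hq, hq0, hvw, hsplit, hS0z, hsb, hs1, e1, e2, hwsum]
end

section
/- Nesting property: if screening test D^ν(u) + π⁰_ℓ(u) > p̄ passes for index ℓ ∈ S̄ at node ν, then for any descendant node ν' = (S₀', S₁', S̄') of ν with ℓ ∈ S̄', the same test passes at ν', i.e., D^{ν'}(u) + π⁰_ℓ(u) > p̄. -/
/-- Nesting property: if the zero-branch screening test passes for index ℓ at
node ν, it also passes at any descendant node ν' with ℓ still undecided. -/
theorem screening_nesting {m n : ℕ} (A : Fin m → Fin n → ℝ) (y : Fin m → ℝ)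
    (lam M : ℝ) (hlam : 0 < lam) (hM : 0 < M)
    (S0 S1 Sbar S0' S1' Sbar' : Finset (Fin n))
    (hcover : S0 ∪ S1 ∪ Sbar = Finset.univ)
    (h01 : Disjoint S0 S1) (h0b : Disjoint S0 Sbar) (h1b : Disjoint S1 Sbar)
    (hcover' : S0' ∪ S1' ∪ Sbar' = Finset.univ)
    (h01' : Disjoint S0' S1') (h0b' : Disjoint S0' Sbar') (h1b' : Disjoint S1' Sbar')
    (hd0 : S0 ⊆ S0') (hd1 : S1 ⊆ S1') (hdb : Sbar' ⊆ Sbar)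
    (l : Fin n) (hl : l ∈ Sbar) (hl' : l ∈ Sbar')
    (u : Fin m → ℝ) (pbar : ℝ)
    (htest : dualObj A y lam M S1 Sbar u + piv0 A lam M l u > pbar) :
    dualObj A y lam M S1' Sbar' u + piv0 A lam M l u > pbar := by
  have hmono : dualObj A y lam M S1 Sbar u ≤ dualObj A y lam M S1' Sbar' u := by
    unfold dualObj
    have hkey : ∑ i ∈ Sbar', piv0 A lam M i u + ∑ i ∈ S1', piv A lam M i u
        ≤ ∑ i ∈ Sbar, piv0 A lam M i u + ∑ i ∈ S1, piv A lam M i u := by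
      have hT : S1' \ S1 ⊆ Sbar \ Sbar' := by
        intro i hi
        rw [Finset.mem_sdiff] at hi ⊢
        obtain ⟨hi1, hi2⟩ := hi
        constructor
        · have : i ∈ S0 ∪ S1 ∪ Sbar := hcover ▸ Finset.mem_univ i
          rcases Finset.mem_union.mp this with h | h
          · rcases Finset.mem_union.mp h with h | h
            · exact absurd hi1 (Finset.disjoint_left.mp h01' (hd0 h))
            · exact absurd h hi2
          · exact h
        · exact Finset.disjoint_left.mp h1b' hi1
      have hpiv0_nonneg : ∀ i ∈ Sbar \ Sbar', 0 ≤ piv0 A lam M i u := fun i _ => by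
        unfold piv0; positivity
      have h1 : ∑ i ∈ S1' \ S1, piv A lam M i u
          ≤ ∑ i ∈ Sbar \ Sbar', piv0 A lam M i u := by
        calc ∑ i ∈ S1' \ S1, piv A lam M i u
            ≤ ∑ i ∈ S1' \ S1, piv0 A lam M i u := by
              apply Finset.sum_le_sum
              intro i _
              unfold piv piv0
              exact mul_le_mul_of_nonneg_left (le_max_right _ _) hM.le
          _ ≤ ∑ i ∈ Sbar \ Sbar', piv0 A lam M i u :=
              Finset.sum_le_sum_of_subset_of_nonneg hT (fun i hi _ => hpiv0_nonneg i hi)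
      have e1 : ∑ i ∈ S1', piv A lam M i u
          = ∑ i ∈ S1, piv A lam M i u + ∑ i ∈ S1' \ S1, piv A lam M i u := by
        rw [← Finset.sum_union (Finset.disjoint_sdiff), Finset.union_sdiff_of_subset hd1]
      have e2 : ∑ i ∈ Sbar, piv0 A lam M i u
          = ∑ i ∈ Sbar', piv0 A lam M i u + ∑ i ∈ Sbar \ Sbar', piv0 A lam M i u := by
        rw [← Finset.sum_union (Finset.disjoint_sdiff), Finset.union_sdiff_of_subset hdb]
      rw [e1, e2]; linarith
    linarith
  linarith
end

section
/- If both screening tests pass for the same index ℓ ∈ S̄ at node ν, i.e., D^ν(u) + π⁰_ℓ(u) > p̄ and D^ν(u) + π¹_ℓ(u) > p̄ with p̄ ≥ p*, then no x feasible at node ν (‖x‖∞ ≤ M, x_{S₀} = 0, x_{S₁} componentwise nonzero) achieves the global optimum p*, so node ν can be pruned. -/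
/-- Values of the full ℓ₀-penalized problem over the box ‖x‖∞ ≤ M. -/
noncomputable def fullSet {m n : ℕ} (A : Fin m → Fin n → ℝ) (y : Fin m → ℝ)
    (lam M : ℝ) : Set ℝ :=
  {c | ∃ x : Fin n → ℝ, (∀ i, |x i| ≤ M) ∧
    c = (1/2) * ∑ j, (y j - ∑ i, A j i * x i)^2
          + lam * ((Finset.univ.filter fun i => x i ≠ 0).card : ℝ)}

/-- Values of the node sub-problem at node ν = (S₀, S₁, S̄). -/
noncomputable def nodeSet {m n : ℕ} (A : Fin m → Fin n → ℝ) (y : Fin m → ℝ)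
    (lam M : ℝ) (S0 S1 Sbar : Finset (Fin n)) : Set ℝ :=
  {c | ∃ x : Fin n → ℝ, (∀ i, |x i| ≤ M) ∧ (∀ i ∈ S0, x i = 0) ∧
    c = (1/2) * ∑ j, (y j - ∑ i, A j i * x i)^2
          + lam * ((Sbar.filter fun i => x i ≠ 0).card : ℝ) + lam * S1.card}

/-- If both screening tests pass for the same index ℓ ∈ S̄ at node ν, then no x
feasible at node ν achieves the global optimum p*: node ν can be pruned. -/
theorem prune_node {m n : ℕ} (A : Fin m → Fin n → ℝ) (y : Fin m → ℝ)
    (lam M : ℝ) (hlam : 0 < lam) (hM : 0 < M)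
    (S0 S1 Sbar : Finset (Fin n))
    (hcover : S0 ∪ S1 ∪ Sbar = Finset.univ)
    (h01 : Disjoint S0 S1) (h0b : Disjoint S0 Sbar) (h1b : Disjoint S1 Sbar)
    (l : Fin n) (hl : l ∈ Sbar) (u : Fin m → ℝ) (pbar : ℝ)
    (hpbar : sInf (fullSet A y lam M) ≤ pbar)
    (htest0 : dualObj A y lam M S1 Sbar u + piv0 A lam M l u > pbar)
    (htest1 : dualObj A y lam M S1 Sbar u + piv1 A lam M l u > pbar) :
    ∀ x : Fin n → ℝ, (∀ i, |x i| ≤ M) → (∀ i ∈ S0, x i = 0) →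
      (∀ i ∈ S1, x i ≠ 0) →
      (1/2) * ∑ j, (y j - ∑ i, A j i * x i)^2
          + lam * ((Finset.univ.filter fun i => x i ≠ 0).card : ℝ)
        > sInf (fullSet A y lam M) := by
  intro x hbox hS0 hS1
  have hMne : M ≠ 0 := ne_of_gt hM
  -- the dual variable inner products
  set c : Fin n → ℝ := fun i => ∑ j, A j i * u j with hc
  have hpiv : ∀ i, piv A lam M i u = M * |c i| - lam := by
    intro i; unfold piv
    rw [show (|∑ j, A j i * u j|) = |c i| from rfl]
    field_simp
    try ring
  have hpiv0 : ∀ i, piv0 A lam M i u = M * max 0 (|c i| - lam / M) := fun i => rfl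
  have hpiv1 : ∀ i, piv1 A lam M i u = M * max 0 (lam / M - |c i|) := fun i => rfl
  have hpiv0nn : ∀ i, 0 ≤ piv0 A lam M i u := by
    intro i; rw [hpiv0]; exact mul_nonneg hM.le (le_max_left _ _)
  have hpiv0ge : ∀ i, M * |c i| - lam ≤ piv0 A lam M i u := by
    intro i; rw [hpiv0]
    have : |c i| - lam / M ≤ max 0 (|c i| - lam / M) := le_max_right _ _
    have := mul_le_mul_of_nonneg_left this hM.le
    calc M * |c i| - lam = M * (|c i| - lam / M) := by field_simp
      _ ≤ M * max 0 (|c i| - lam / M) := this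
  -- quadratic weak-duality bound
  have quad : (1/2) * ∑ j, (y j)^2 - (1/2) * ∑ j, (y j - u j)^2
      - ∑ j, u j * (∑ i, A j i * x i)
      ≤ (1/2) * ∑ j, (y j - ∑ i, A j i * x i)^2 := by
    have h := Finset.sum_le_sum (s := Finset.univ)
      (f := fun j => (1/2)*(y j)^2 - (1/2)*(y j - u j)^2 - u j * (∑ i, A j i * x i))
      (g := fun j => (1/2)*(y j - ∑ i, A j i * x i)^2)
      (fun j _ => by nlinarith [sq_nonneg (y j - (∑ i, A j i * x i) - u j)])
    have e1 : ∑ j, ((1/2)*(y j)^2 - (1/2)*(y j - u j)^2 - u j * (∑ i, A j i * x i))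
        = (1/2) * ∑ j, (y j)^2 - (1/2) * ∑ j, (y j - u j)^2
          - ∑ j, u j * (∑ i, A j i * x i) := by
      rw [Finset.sum_sub_distrib, Finset.sum_sub_distrib, ← Finset.mul_sum, ← Finset.mul_sum]
    have e2 : ∑ j, (1/2)*(y j - ∑ i, A j i * x i)^2
        = (1/2) * ∑ j, (y j - ∑ i, A j i * x i)^2 := by rw [← Finset.mul_sum]
    rw [e1, e2] at h; exact h
  -- swap double sum
  have swap : ∑ j, u j * (∑ i, A j i * x i) = ∑ i, x i * c i := by
    simp only [hc, Finset.mul_sum]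
    rw [Finset.sum_comm]
    exact Finset.sum_congr rfl (fun i _ => Finset.sum_congr rfl (fun j _ => by ring))
  -- cardinality decomposition
  have hfilter0 : S0.filter (fun i => x i ≠ 0) = ∅ := by
    apply Finset.filter_eq_empty_iff.mpr
    intro i hi; simpa using hS0 i hi
  have hfilter1 : S1.filter (fun i => x i ≠ 0) = S1 :=
    Finset.filter_eq_self.mpr (fun i hi => hS1 i hi)
  have hcard : ((Finset.univ.filter fun i => x i ≠ 0).card : ℝ)
      = S1.card + ((Sbar.filter fun i => x i ≠ 0).card : ℝ) := by
    rw [← hcover, Finset.filter_union, Finset.filter_union, hfilter0, hfilter1,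
      Finset.empty_union,
      Finset.card_union_of_disjoint (h1b.mono_right (Finset.filter_subset _ _))]
    push_cast; ring
  -- sum decomposition
  have hsum : ∑ i, x i * c i = ∑ i ∈ S1, x i * c i + ∑ i ∈ Sbar, x i * c i := by
    rw [← hcover, Finset.sum_union (Finset.disjoint_union_left.mpr ⟨h0b, h1b⟩),
      Finset.sum_union h01, Finset.sum_eq_zero (fun i hi => by rw [hS0 i hi]; ring)]
    ring
  -- per-term bound on S1
  have hxc : ∀ i, x i * c i ≤ M * |c i| := by
    intro i
    calc x i * c i ≤ |x i * c i| := le_abs_self _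
      _ = |x i| * |c i| := abs_mul _ _
      _ ≤ M * |c i| := mul_le_mul_of_nonneg_right (hbox i) (abs_nonneg _)
  have hS1bound : ∑ i ∈ S1, x i * c i ≤ lam * S1.card + ∑ i ∈ S1, piv A lam M i u := by
    have := Finset.sum_le_sum (s := S1) (f := fun i => x i * c i)
      (g := fun i => lam + piv A lam M i u)
      (fun i _ => by
        show x i * c i ≤ lam + piv A lam M i u
        have := hxc i; rw [hpiv i]; linarith)
    rw [Finset.sum_add_distrib, Finset.sum_const, nsmul_eq_mul] at this
    linarith [this]
  -- per-term bound on Sbar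
  have hgen : ∀ i ∈ Sbar, -piv0 A lam M i u ≤ -(x i * c i) + (if x i ≠ 0 then lam else 0) := by
    intro i _
    by_cases hxi : x i = 0
    · simp [hxi]; exact hpiv0nn i
    · simp only [hxi, if_pos, ne_eq, not_false_eq_true, if_true]
      have := hxc i; have := hpiv0ge i; linarith
  set E : ℝ := if x l = 0 then piv0 A lam M l u else piv1 A lam M l u with hE
  have hlbound : -piv0 A lam M l u + E ≤ -(x l * c l) + (if x l ≠ 0 then lam else 0) := by
    by_cases hxl : x l = 0
    · simp only [hE, hxl, if_pos, ne_eq, not_true_eq_false, if_false, if_true]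
      simp [hxl]
    · simp only [hE, hxl, ne_eq, if_neg, not_false_eq_true, if_true]
      have hMM : M * (lam / M) = lam := by field_simp
      have h1 : piv1 A lam M l u - piv0 A lam M l u = lam - M * |c l| := by
        rw [hpiv0, hpiv1]
        rcases le_total (|c l|) (lam / M) with h | h
        · have e0 : (0:ℝ) ⊔ (|c l| - lam / M) = 0 := max_eq_left (by linarith)
          have e1 : (0:ℝ) ⊔ (lam / M - |c l|) = lam / M - |c l| :=
            max_eq_right (by linarith)
          rw [e0, e1, mul_zero, sub_zero, mul_sub, hMM]
        · have e0 : (0:ℝ) ⊔ (|c l| - lam / M) = |c l| - lam / M :=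
            max_eq_right (by linarith)
          have e1 : (0:ℝ) ⊔ (lam / M - |c l|) = 0 := max_eq_left (by linarith)
          rw [e0, e1, mul_zero, zero_sub, mul_sub, hMM]
          ring
      have := hxc l
      linarith
  have hSbarbound : -∑ i ∈ Sbar, piv0 A lam M i u + E
      ≤ -∑ i ∈ Sbar, x i * c i + lam * ((Sbar.filter fun i => x i ≠ 0).card : ℝ) := by
    have hind : ∑ i ∈ Sbar, (if x i ≠ 0 then lam else 0)
        = lam * ((Sbar.filter fun i => x i ≠ 0).card : ℝ) := by
      rw [← Finset.sum_filter, Finset.sum_const, nsmul_eq_mul]; ring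
    have hrest := Finset.sum_le_sum (s := Sbar.erase l)
      (f := fun i => -piv0 A lam M i u)
      (g := fun i => -(x i * c i) + (if x i ≠ 0 then lam else 0))
      (fun i hi => hgen i (Finset.mem_of_mem_erase hi))
    have e1 : ∑ i ∈ Sbar, (-(x i * c i) + (if x i ≠ 0 then lam else 0))
        = -∑ i ∈ Sbar, x i * c i + lam * ((Sbar.filter fun i => x i ≠ 0).card : ℝ) := by
      rw [Finset.sum_add_distrib, hind, Finset.sum_neg_distrib]
    rw [← e1, ← Finset.add_sum_erase _ _ hl, ← Finset.add_sum_erase _ _ hl]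
    simp only [Finset.sum_neg_distrib] at hrest ⊢
    linarith
  -- combine
  have hEfinal : dualObj A y lam M S1 Sbar u + E > pbar := by
    by_cases hxl : x l = 0
    · simpa [hE, hxl] using htest0
    · simpa [hE, hxl] using htest1
  have key : dualObj A y lam M S1 Sbar u + E
      ≤ (1/2) * ∑ j, (y j - ∑ i, A j i * x i)^2
        + lam * ((Finset.univ.filter fun i => x i ≠ 0).card : ℝ) := by
    unfold dualObj
    rw [hcard]
    rw [swap, hsum] at quad
    linarith
  calc sInf (fullSet A y lam M) ≤ pbar := hpbar
    _ < dualObj A y lam M S1 Sbar u + E := hEfinal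
    _ ≤ _ := key
end
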